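/- Let (α_n)_{n≥1} and (β_n)_{n≥1} be complex numbers and let (P_n)_{n≥0} be the monic polynomials in ℂ[x] defined by P_{-1} = 0, P_0 = 1 and P_{n+1}(x) = (x − α_{n+1}) P_n(x) − β_n P_{n−1}(x) for n ≥ 0. Suppose there exist formal power series u(z) and g(z) over ℂ with u(0) = 0, u'(0) = 1 and g(0) = 1 such that (g(z) − x·u(z)) · Σ_{n≥0} P_n(x) z^n = 1 in the ring ℂ[x][[z]] of formal power series in z with polynomial coefficients. Then the recursion coefficients are constant from the second step on: α_n = α_2 for all n ≥ 2 and β_n = β_2 for all n ≥ 2. -/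

import Mathlib

/-- If the monic orthogonal-polynomial-type recursion
`P_{n+1} = (x - α_{n+1}) P_n - β_n P_{n-1}` (with `P_{-1} = 0`, `P_0 = 1`) has a generating
function of the form `1 / (g(z) - x u(z))` with `u(0) = 0`, `u'(0) = 1`, `g(0) = 1`, then the
recursion coefficients are constant from the second step on. -/
theorem stmt_0 (α β : ℕ → ℂ) (P : ℕ → Polynomial ℂ)
    (hP0 : P 0 = 1)
    (hP1 : P 1 = Polynomial.X - Polynomial.C (α 1))
    (hPrec : ∀ n, P (n + 2) =
      (Polynomial.X - Polynomial.C (α (n + 2))) * P (n + 1) - Polynomial.C (β (n + 1)) * P n)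
    (u g : PowerSeries ℂ)
    (hu0 : PowerSeries.constantCoeff (R := ℂ) u = 0)
    (hu1 : PowerSeries.coeff (R := ℂ) 1 u = 1)
    (hg0 : PowerSeries.constantCoeff (R := ℂ) g = 1)
    (hgen : (PowerSeries.map (Polynomial.C : ℂ →+* Polynomial ℂ) g -
        PowerSeries.C (R := Polynomial ℂ) Polynomial.X *
          PowerSeries.map (Polynomial.C : ℂ →+* Polynomial ℂ) u) *
        PowerSeries.mk (fun n => P n) = 1) :
    ∀ n, 2 ≤ n → α n = α 2 ∧ β n = β 2 := by
  classical
  -- degree bound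
  have hdeg : ∀ m j, m < j → (P m).coeff j = 0 := by
    intro m
    induction m using Nat.strong_induction_on with
    | _ m ih =>
      match m with
      | 0 =>
        intro j hj
        rw [hP0]
        rw [Polynomial.coeff_one, if_neg (by omega)]
      | 1 =>
        intro j hj
        rw [hP1]
        simp only [Polynomial.coeff_sub, Polynomial.coeff_X, Polynomial.coeff_C]
        rw [if_neg (by omega), if_neg (by omega)]
        ring
      | (m+2) =>
        intro j hj
        obtain ⟨jj, rfl⟩ : ∃ jj, j = jj + 1 := ⟨j - 1, by omega⟩
        rw [hPrec, sub_mul, Polynomial.coeff_sub, Polynomial.coeff_sub,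
          Polynomial.coeff_X_mul, Polynomial.coeff_C_mul, Polynomial.coeff_C_mul,
          ih (m+1) (by omega) jj (by omega), ih (m+1) (by omega) (jj+1) (by omega),
          ih m (by omega) (jj+1) (by omega)]
        ring
  -- leading coefficient is 1
  have ctop : ∀ m, (P m).coeff m = 1 := by
    intro m
    induction m using Nat.strong_induction_on with
    | _ m ih =>
      match m with
      | 0 => rw [hP0]; simp
      | 1 => rw [hP1]; simp
      | (m+2) =>
        rw [hPrec, sub_mul, Polynomial.coeff_sub, Polynomial.coeff_sub]
        have : (m : ℕ) + 2 = (m + 1) + 1 := rfl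
        rw [this, Polynomial.coeff_X_mul, Polynomial.coeff_C_mul, Polynomial.coeff_C_mul,
          ih (m+1) (by omega), hdeg (m+1) (m+2) (by omega), hdeg m (m+2) (by omega)]
        ring
  -- second coefficient recursion
  have hS : ∀ m, (P (m+2)).coeff (m+1) = (P (m+1)).coeff m - α (m+2) := by
    intro m
    rw [hPrec, sub_mul, Polynomial.coeff_sub, Polynomial.coeff_sub,
      Polynomial.coeff_X_mul, Polynomial.coeff_C_mul, Polynomial.coeff_C_mul,
      ctop (m+1), hdeg m (m+1) (by omega)]
    ring
  -- third coefficient recursion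
  have hQ : ∀ m, (P (m+3)).coeff (m+1)
      = (P (m+2)).coeff m - α (m+3) * (P (m+2)).coeff (m+1) - β (m+2) := by
    intro m
    rw [hPrec (m+1), sub_mul, Polynomial.coeff_sub, Polynomial.coeff_sub,
      Polynomial.coeff_X_mul, Polynomial.coeff_C_mul, Polynomial.coeff_C_mul,
      ctop (m+1)]
    ring
  -- the convolution identity, coefficientwise
  have hE : ∀ n j, 1 ≤ n →
      (∑ k ∈ Finset.range (n+1),
        ((PowerSeries.coeff (R := ℂ) k g) * (P (n - k)).coeff (j+1)
          - (PowerSeries.coeff (R := ℂ) k u) * (P (n - k)).coeff j)) = 0 := by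
    intro n j hn
    have h := congrArg (PowerSeries.coeff (R := Polynomial ℂ) n) hgen
    rw [PowerSeries.coeff_mul, PowerSeries.coeff_one, if_neg (by omega),
      Finset.Nat.sum_antidiagonal_eq_sum_range_succ_mk] at h
    have h2 := congrArg (fun p : Polynomial ℂ => p.coeff (j+1)) h
    simp only [Polynomial.finset_sum_coeff, Polynomial.coeff_zero] at h2
    rw [← h2]
    apply Finset.sum_congr rfl
    intro k _
    simp only [map_sub, PowerSeries.coeff_map, PowerSeries.coeff_C_mul,
      PowerSeries.coeff_mk, sub_mul, Polynomial.coeff_sub, Polynomial.coeff_C_mul,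
      mul_assoc, Polynomial.coeff_X_mul, Polynomial.coeff_C_mul]
  -- the α identity
  have hα : ∀ m, α (m+2) = PowerSeries.coeff (R := ℂ) 1 g - PowerSeries.coeff (R := ℂ) 2 u := by
    intro m
    have h := hE (m+2) m (by omega)
    rw [Finset.sum_range_succ', Finset.sum_range_succ', Finset.sum_range_succ'] at h
    rw [Finset.sum_eq_zero (fun i hi => by
      simp only [Finset.mem_range] at hi
      have e : m + 2 - (i + 1 + 1 + 1) = m - 1 - i := by omega
      rw [e, hdeg (m-1-i) (m+1) (by omega), hdeg (m-1-i) m (by omega)]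
      ring)] at h
    have e0 : m + 2 - 0 = m + 2 := rfl
    have e1 : m + 2 - (0+1) = m + 1 := rfl
    have e2 : m + 2 - (0+1+1) = m := rfl
    rw [e0, e1, e2] at h
    rw [← PowerSeries.coeff_zero_eq_constantCoeff] at hu0 hg0
    rw [hu0, hg0, hu1, ctop (m+1), hdeg m (m+1) (by omega), ctop m, hS m] at h
    linear_combination -h
  -- the β identity
  have hβ : ∀ m, β (m+2) = PowerSeries.coeff (R := ℂ) 2 g - PowerSeries.coeff (R := ℂ) 3 u
      - PowerSeries.coeff (R := ℂ) 2 u * α (m+2) := by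
    intro m
    have h := hE (m+3) m (by omega)
    rw [Finset.sum_range_succ', Finset.sum_range_succ', Finset.sum_range_succ',
      Finset.sum_range_succ'] at h
    rw [Finset.sum_eq_zero (fun i hi => by
      simp only [Finset.mem_range] at hi
      have e : m + 3 - (i + 1 + 1 + 1 + 1) = m - 1 - i := by omega
      rw [e, hdeg (m-1-i) (m+1) (by omega), hdeg (m-1-i) m (by omega)]
      ring)] at h
    have e0 : m + 3 - 0 = m + 3 := rfl
    have e1 : m + 3 - (0+1) = m + 2 := rfl
    have e2 : m + 3 - (0+1+1) = m + 1 := rfl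
    have e3 : m + 3 - (0+1+1+1) = m := rfl
    rw [e0, e1, e2, e3] at h
    rw [← PowerSeries.coeff_zero_eq_constantCoeff] at hu0 hg0
    rw [hu0, hg0, hu1, ctop (m+1), hdeg m (m+1) (by omega), ctop m, hQ m,
      hα (m+1), hS m] at h
    linear_combination -h
  intro n hn
  obtain ⟨m, rfl⟩ : ∃ m, n = m + 2 := ⟨n - 2, by omega⟩
  refine ⟨?_, ?_⟩
  · rw [hα m]; exact (hα 0).symm
  · rw [hβ m, hα m, ← hα 0]
    exact (hβ 0).symm
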